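/- Let n ≥ 2 and 1 ≤ ℓ ≤ n−1. If u ∈ L¹(ℝⁿ, Λ^ℓ) is a co-closed ℓ-form, i.e. δu = 0 in the sense of distributions on ℝⁿ, then every component of u has vanishing integral: ∫_{ℝⁿ} u(x) dx = 0 (component-wise). In particular every divergence-free vector field u ∈ L¹(ℝⁿ, ℂⁿ) satisfies ∫_{ℝⁿ} u = 0. -/

import Mathlib

open MeasureTheory

open Filter Topology

section Aux

lemma coord_abs_le_norm {n : ℕ} (y : EuclideanSpace ℝ (Fin n)) (i : Fin n) : |y i| ≤ ‖y‖ := by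
  rw [EuclideanSpace.norm_eq]
  have h1 : |y i| = Real.sqrt (‖y i‖ ^ 2) := by
    rw [Real.sqrt_sq_eq_abs]; simp [Real.norm_eq_abs]
  rw [h1]
  apply Real.sqrt_le_sqrt
  exact Finset.single_le_sum (f := fun j => ‖y j‖ ^ 2) (fun j _ => by positivity) (Finset.mem_univ i)

noncomputable def bumpB (n : ℕ) : ContDiffBump (0 : EuclideanSpace ℝ (Fin n)) :=
  ⟨1, 2, one_pos, one_lt_two⟩

noncomputable def gfun (n : ℕ) (i : Fin n) (c : ℝ) : EuclideanSpace ℝ (Fin n) → ℂ :=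
  fun y => ((y i * bumpB n (c • y) : ℝ) : ℂ)

noncomputable def Dq (n : ℕ) (i : Fin n) (c : ℝ) (x : EuclideanSpace ℝ (Fin n)) (i'' : Fin n) : ℝ :=
  x i * (c * fderiv ℝ (⇑(bumpB n)) (c • x) (EuclideanSpace.single i'' 1))
    + bumpB n (c • x) * (if i = i'' then 1 else 0)

lemma gfun_fderiv (n : ℕ) (i : Fin n) (c : ℝ) (x : EuclideanSpace ℝ (Fin n)) (i'' : Fin n) :
    fderiv ℝ (gfun n i c) x (EuclideanSpace.single i'' 1) = ((Dq n i c x i'' : ℝ) : ℂ) := by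
  have h1 : HasFDerivAt (fun y : EuclideanSpace ℝ (Fin n) => y i)
      (EuclideanSpace.proj (𝕜 := ℝ) i) x := (EuclideanSpace.proj (𝕜 := ℝ) i).hasFDerivAt
  have hsm : HasFDerivAt (fun y : EuclideanSpace ℝ (Fin n) => c • y)
      (c • ContinuousLinearMap.id ℝ _) x := (hasFDerivAt_id x).const_smul c
  have hb : HasFDerivAt (⇑(bumpB n)) (fderiv ℝ (⇑(bumpB n)) (c • x)) (c • x) :=
    ((((bumpB n).contDiff (n:=⊤)).differentiable (by simp)) (c • x)).hasFDerivAt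
  have h2 := hb.comp x hsm
  have h3 := h1.mul h2
  have h4 := Complex.ofRealCLM.hasFDerivAt.comp x h3
  have h5 : (⇑Complex.ofRealCLM ∘ ((fun y : EuclideanSpace ℝ (Fin n) => y i) * (⇑(bumpB n) ∘ HSMul.hSMul c)))
      = gfun n i c := rfl
  rw [h5] at h4
  rw [h4.fderiv]
  simp [Dq, EuclideanSpace.single_apply, _root_.map_smul, mul_ite, mul_one, mul_zero,
    apply_ite Complex.ofReal]

lemma gfun_contDiff (n : ℕ) (i : Fin n) (c : ℝ) : ContDiff ℝ (⊤ : ℕ∞) (gfun n i c) := by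
  have h : ContDiff ℝ ((⊤:ℕ∞) : WithTop ℕ∞)
      (fun y : EuclideanSpace ℝ (Fin n) => y i * bumpB n (c • y)) := by
    apply ContDiff.mul
    · exact (EuclideanSpace.proj (𝕜 := ℝ) i).contDiff
    · exact (bumpB n).contDiff.comp (contDiff_const_smul c)
  exact Complex.ofRealCLM.contDiff.comp h

lemma gfun_hcs (n : ℕ) (i : Fin n) {c : ℝ} (hc : c ≠ 0) : HasCompactSupport (gfun n i c) := by
  apply HasCompactSupport.intro (isCompact_closedBall (0 : EuclideanSpace ℝ (Fin n)) (2/|c|))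
  intro x hx
  have hcpos : 0 < |c| := abs_pos.mpr hc
  have hxn : 2/|c| < ‖x‖ := by
    have := hx
    rw [Metric.mem_closedBall, dist_zero_right, not_le] at this
    exact this
  have h2 : 2 < ‖c • x‖ := by
    rw [norm_smul, Real.norm_eq_abs]
    rw [div_lt_iff₀ hcpos] at hxn
    linarith [hxn]
  have hnm : (c • x) ∉ tsupport (⇑(bumpB n)) := by
    rw [(bumpB n).tsupport_eq]
    intro hmem
    rw [Metric.mem_closedBall, dist_zero_right] at hmem
    have : (bumpB n).rOut = 2 := rfl
    rw [this] at hmem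
    linarith
  have hb0 : bumpB n (c • x) = 0 := image_eq_zero_of_notMem_tsupport hnm
  simp [gfun, hb0]

lemma fderiv_app_le (n : ℕ) {M : ℝ} (hM : ∀ y, ‖fderiv ℝ (⇑(bumpB n)) y‖ ≤ M)
    (y : EuclideanSpace ℝ (Fin n)) (i'' : Fin n) :
    |fderiv ℝ (⇑(bumpB n)) y (EuclideanSpace.single i'' 1)| ≤ M := by
  calc |fderiv ℝ (⇑(bumpB n)) y (EuclideanSpace.single i'' 1)|
      = ‖fderiv ℝ (⇑(bumpB n)) y (EuclideanSpace.single i'' 1)‖ := (Real.norm_eq_abs _).symm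
    _ ≤ ‖fderiv ℝ (⇑(bumpB n)) y‖ * ‖EuclideanSpace.single i'' (1:ℝ)‖ :=
        (fderiv ℝ (⇑(bumpB n)) y).le_opNorm _
    _ = ‖fderiv ℝ (⇑(bumpB n)) y‖ := by rw [EuclideanSpace.norm_single]; simp
    _ ≤ M := hM y

lemma Dq_bound (n : ℕ) (i : Fin n) {M : ℝ} (hM : ∀ y, ‖fderiv ℝ (⇑(bumpB n)) y‖ ≤ M)
    (c : ℝ) (x : EuclideanSpace ℝ (Fin n)) (i'' : Fin n) :
    |Dq n i c x i''| ≤ 2 * M + 1 := by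
  have hM0 : 0 ≤ M := le_trans (norm_nonneg _) (hM 0)
  have h2 : |bumpB n (c • x) * (if i = i'' then 1 else 0)| ≤ 1 := by
    rw [abs_mul]
    have hb : |bumpB n (c • x)| ≤ 1 := by
      rw [abs_of_nonneg ((bumpB n).nonneg)]
      exact (bumpB n).le_one
    have hite : |(if i = i'' then (1:ℝ) else 0)| ≤ 1 := by split <;> norm_num
    calc |bumpB n (c • x)| * |(if i = i'' then (1:ℝ) else 0)| ≤ 1 * 1 :=
          mul_le_mul hb hite (abs_nonneg _) (by norm_num)
      _ = 1 := by norm_num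
  have h1 : |x i * (c * fderiv ℝ (⇑(bumpB n)) (c • x) (EuclideanSpace.single i'' 1))| ≤ 2 * M := by
    by_cases h0 : fderiv ℝ (⇑(bumpB n)) (c • x) = 0
    · rw [h0]; simp; positivity
    · have hts : (c • x) ∈ tsupport (⇑(bumpB n)) :=
        support_fderiv_subset ℝ (by simpa [Function.mem_support] using h0)
      have hn2 : ‖c • x‖ ≤ 2 := by
        rw [(bumpB n).tsupport_eq] at hts
        rw [Metric.mem_closedBall, dist_zero_right] at hts
        exact hts
      have hxc : |x i * c| ≤ 2 := by
        have hco := coord_abs_le_norm (c • x) i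
        have hsm : (c • x) i = c * x i := rfl
        rw [hsm] at hco
        calc |x i * c| = |c * x i| := by ring_nf
          _ ≤ ‖c • x‖ := hco
          _ ≤ 2 := hn2
      calc |x i * (c * fderiv ℝ (⇑(bumpB n)) (c • x) (EuclideanSpace.single i'' 1))|
          = |x i * c| * |fderiv ℝ (⇑(bumpB n)) (c • x) (EuclideanSpace.single i'' 1)| := by
            rw [← abs_mul]; ring_nf
        _ ≤ 2 * M := mul_le_mul hxc (fderiv_app_le n hM _ _) (abs_nonneg _) (by norm_num)
  calc |Dq n i c x i''| ≤ |x i * (c * fderiv ℝ (⇑(bumpB n)) (c • x) (EuclideanSpace.single i'' 1))|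
        + |bumpB n (c • x) * (if i = i'' then 1 else 0)| := abs_add_le _ _
    _ ≤ 2 * M + 1 := add_le_add h1 h2

lemma Dq_tendsto (n : ℕ) (i : Fin n) {M : ℝ} (hM : ∀ y, ‖fderiv ℝ (⇑(bumpB n)) y‖ ≤ M)
    (x : EuclideanSpace ℝ (Fin n)) (i'' : Fin n) :
    Tendsto (fun k : ℕ => Dq n i (((k:ℝ)+1)⁻¹) x i'') atTop (𝓝 (if i = i'' then 1 else 0)) := by
  have hc : Tendsto (fun k : ℕ => ((k:ℝ)+1)⁻¹) atTop (𝓝 0) := by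
    simpa [one_div] using (tendsto_one_div_add_atTop_nhds_zero_nat : Tendsto (fun k : ℕ => 1 / ((k : ℝ) + 1)) atTop (𝓝 0))
  have hx0 : Tendsto (fun k : ℕ => ((k:ℝ)+1)⁻¹ • x) atTop (𝓝 0) := by
    simpa using hc.smul_const x
  have hb1 : Tendsto (fun k : ℕ => bumpB n (((k:ℝ)+1)⁻¹ • x)) atTop (𝓝 1) := by
    have h := ((bumpB n).continuous.tendsto 0).comp hx0
    have h01 : bumpB n (0 : EuclideanSpace ℝ (Fin n)) = 1 :=
      (bumpB n).one_of_mem_closedBall (Metric.mem_closedBall_self (le_of_lt (bumpB n).rIn_pos))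
    rw [h01] at h
    exact h
  have h1 : Tendsto (fun k : ℕ => x i * (((k:ℝ)+1)⁻¹ *
      fderiv ℝ (⇑(bumpB n)) (((k:ℝ)+1)⁻¹ • x) (EuclideanSpace.single i'' 1))) atTop (𝓝 0) := by
    apply squeeze_zero_norm (a := fun k : ℕ => (|x i| * M) * ((k:ℝ)+1)⁻¹)
    · intro k
      have hpos : (0:ℝ) ≤ ((k:ℝ)+1)⁻¹ := by positivity
      rw [Real.norm_eq_abs, abs_mul, abs_mul, abs_of_nonneg hpos]
      calc |x i| * (((k:ℝ)+1)⁻¹ * |fderiv ℝ (⇑(bumpB n)) (((k:ℝ)+1)⁻¹ • x) (EuclideanSpace.single i'' 1)|)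
          ≤ |x i| * (((k:ℝ)+1)⁻¹ * M) := by
            apply mul_le_mul_of_nonneg_left _ (abs_nonneg _)
            exact mul_le_mul_of_nonneg_left (fderiv_app_le n hM _ _) hpos
        _ = (|x i| * M) * ((k:ℝ)+1)⁻¹ := by ring
    · simpa using hc.const_mul (|x i| * M)
  have h := h1.add (hb1.mul_const (if i = i'' then (1:ℝ) else 0))
  simpa [Dq] using h

lemma Dq_continuous (n : ℕ) (i : Fin n) (c : ℝ) (i'' : Fin n) :
    Continuous fun x => Dq n i c x i'' := by
  have hc1 : Continuous fun x : EuclideanSpace ℝ (Fin n) => x i :=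
    (EuclideanSpace.proj (𝕜 := ℝ) i).continuous
  have hsmul : Continuous fun x : EuclideanSpace ℝ (Fin n) => c • x :=
    continuous_const_smul c
  have hfd : Continuous (fderiv ℝ (⇑(bumpB n))) :=
    ((bumpB n).contDiff (n := ⊤)).continuous_fderiv (by simp)
  have happ : Continuous fun x : EuclideanSpace ℝ (Fin n) =>
      fderiv ℝ (⇑(bumpB n)) (c • x) (EuclideanSpace.single i'' 1) :=
    (ContinuousLinearMap.apply ℝ ℝ (EuclideanSpace.single i'' (1:ℝ))).continuous.comp
      (hfd.comp hsmul)
  exact (hc1.mul (continuous_const.mul happ)).add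
    (((bumpB n).continuous.comp hsmul).mul continuous_const)

end Aux

/-- **Vanishing integral of integrable co-closed forms on `ℝⁿ`.**

Let `n ≥ 2` and `1 ≤ ℓ ≤ n − 1`.  An `ℓ`-form on `ℝⁿ` with values in `Λ^ℓ(ℂⁿ)` is
represented by its family of components `u x I : ℂ`, indexed by the subsets
`I ⊆ {0, …, n−1}` with `#I = ℓ`.  The hypothesis `hδ` expresses that `δ u = 0` in the
sense of distributions: for every smooth compactly supported `(ℓ−1)`-form `φ`
(given by its components `φ J`), the pairing `∫ ⟨u, dφ⟩ = 0`, where the exterior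
derivative has components `(dφ)_I = ∑_{i ∈ I} (−1)^{#{j ∈ I : j < i}} ∂ᵢ φ_{I∖{i}}`.

The conclusion: every component of `u` has vanishing integral.  In particular every
divergence-free vector field `u ∈ L¹(ℝⁿ, ℂⁿ)` (case `ℓ = 1`) has `∫_{ℝⁿ} u = 0`. -/
theorem integral_eq_zero_of_coclosed_L1
    (n ℓ : ℕ) (hn : 2 ≤ n) (hl1 : 1 ≤ ℓ) (hln : ℓ ≤ n - 1)
    (u : EuclideanSpace ℝ (Fin n) → {I : Finset (Fin n) // I.card = ℓ} → ℂ)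
    (hu : ∀ I, Integrable (fun x => u x I))
    (hδ : ∀ φ : {J : Finset (Fin n) // J.card = ℓ - 1} → EuclideanSpace ℝ (Fin n) → ℂ,
      (∀ J, ContDiff ℝ (⊤ : ℕ∞) (φ J)) → (∀ J, HasCompactSupport (φ J)) →
      (∑ I : {I : Finset (Fin n) // I.card = ℓ},
        ∫ x, u x I *
          ∑ i ∈ I.1.attach,
            (-1 : ℂ) ^ ((I.1.filter (fun j => j < i.1)).card) *
              fderiv ℝ (φ ⟨I.1.erase i.1, by
                rw [Finset.card_erase_of_mem i.2, I.2]⟩) x (EuclideanSpace.single i.1 1)) = 0) :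
    ∀ I, (∫ x, u x I) = 0 := by
  intro I
  classical
  obtain ⟨i, hi⟩ : I.1.Nonempty := Finset.card_pos.mp (by rw [I.2]; omega)
  obtain ⟨M, hM⟩ : ∃ M : ℝ, ∀ y, ‖fderiv ℝ (⇑(bumpB n)) y‖ ≤ M :=
    (((bumpB n).hasCompactSupport).fderiv (𝕜 := ℝ)).exists_bound_of_continuous
      (((bumpB n).contDiff (n := ⊤)).continuous_fderiv (by simp))
  have hM0 : 0 ≤ M := le_trans (norm_nonneg _) (hM 0)
  set m : ℕ := (I.1.filter (fun j => j < i)).card with hm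
  set J : Finset (Fin n) := I.1.erase i with hJdef
  set Φ : ℝ → {J' : Finset (Fin n) // J'.card = ℓ - 1} → EuclideanSpace ℝ (Fin n) → ℂ :=
    fun c K => if K.1 = J then gfun n i c else 0 with hΦ
  set c : ℕ → ℝ := fun k => ((k : ℝ) + 1)⁻¹ with hcdef
  have hcne : ∀ k, c k ≠ 0 := fun k => by positivity
  -- the hypothesis applied to our test forms
  have hzero : ∀ k : ℕ, (∑ I' : {I : Finset (Fin n) // I.card = ℓ},
      ∫ x, u x I' * ∑ i'' ∈ I'.1.attach,
        (-1 : ℂ) ^ ((I'.1.filter (fun j => j < i''.1)).card) *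
          fderiv ℝ (Φ (c k) ⟨I'.1.erase i''.1, by
            rw [Finset.card_erase_of_mem i''.2, I'.2]⟩) x (EuclideanSpace.single i''.1 1)) = 0 := by
    intro k
    apply hδ
    · intro K
      by_cases hK : K.1 = J
      · simp only [hΦ, hK, if_true]
        exact gfun_contDiff n i (c k)
      · simp only [hΦ, hK, if_false]
        exact contDiff_const
    · intro K
      by_cases hK : K.1 = J
      · simp only [hΦ, hK, if_true]
        exact gfun_hcs n i (hcne k)
      · simp only [hΦ, hK, if_false]
        exact HasCompactSupport.intro (isCompact_singleton (x := (0:EuclideanSpace ℝ (Fin n))))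
          (fun x _ => rfl)
  -- rewrite the fderiv term
  have hterm : ∀ (k : ℕ) (I' : {I : Finset (Fin n) // I.card = ℓ})
      (x : EuclideanSpace ℝ (Fin n)) (i'' : {y // y ∈ I'.1}),
      fderiv ℝ (Φ (c k) ⟨I'.1.erase i''.1, by
          rw [Finset.card_erase_of_mem i''.2, I'.2]⟩) x (EuclideanSpace.single i''.1 1)
        = if I'.1.erase i''.1 = J then ((Dq n i (c k) x i''.1 : ℝ) : ℂ) else 0 := by
    intro k I' x i''
    by_cases h : I'.1.erase i''.1 = J
    · simp only [hΦ, h, if_true]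
      exact gfun_fderiv n i (c k) x i''.1
    · simp only [hΦ, h, if_false]
      have hz : (0 : EuclideanSpace ℝ (Fin n) → ℂ) = fun _ => 0 := rfl
      rw [hz, fderiv_const_apply]
      rfl
  -- per-component limit
  have hpt : ∀ I' : {I : Finset (Fin n) // I.card = ℓ},
      Tendsto (fun k : ℕ => ∫ x, u x I' * ∑ i'' ∈ I'.1.attach,
          (-1 : ℂ) ^ ((I'.1.filter (fun j => j < i''.1)).card) *
            fderiv ℝ (Φ (c k) ⟨I'.1.erase i''.1, by
              rw [Finset.card_erase_of_mem i''.2, I'.2]⟩) x (EuclideanSpace.single i''.1 1)) atTop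
        (𝓝 (∫ x, u x I' * (if I' = I then ((-1:ℂ)^m) else 0))) := by
    intro I'
    have hfeq : ∀ k : ℕ, (fun x => u x I' * ∑ i'' ∈ I'.1.attach,
        (-1 : ℂ) ^ ((I'.1.filter (fun j => j < i''.1)).card) *
          fderiv ℝ (Φ (c k) ⟨I'.1.erase i''.1, by
            rw [Finset.card_erase_of_mem i''.2, I'.2]⟩) x (EuclideanSpace.single i''.1 1))
        = fun x => u x I' * ∑ i'' ∈ I'.1.attach,
          (-1 : ℂ) ^ ((I'.1.filter (fun j => j < i''.1)).card) *
            (if I'.1.erase i''.1 = J then ((Dq n i (c k) x i''.1 : ℝ) : ℂ) else 0) := by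
      intro k
      funext x
      congr 1
      refine Finset.sum_congr rfl fun i'' _ => ?_
      rw [hterm k I' x i'']
    have hre : (fun k : ℕ => ∫ x, u x I' * ∑ i'' ∈ I'.1.attach,
        (-1 : ℂ) ^ ((I'.1.filter (fun j => j < i''.1)).card) *
          fderiv ℝ (Φ (c k) ⟨I'.1.erase i''.1, by
            rw [Finset.card_erase_of_mem i''.2, I'.2]⟩) x (EuclideanSpace.single i''.1 1))
        = fun k : ℕ => ∫ x, u x I' * ∑ i'' ∈ I'.1.attach,
          (-1 : ℂ) ^ ((I'.1.filter (fun j => j < i''.1)).card) *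
            (if I'.1.erase i''.1 = J then ((Dq n i (c k) x i''.1 : ℝ) : ℂ) else 0) :=
      funext fun k => by rw [hfeq k]
    rw [hre]
    -- the limit of the integrands
    have hcomb : (∑ i'' ∈ I'.1.attach,
        (-1 : ℂ) ^ ((I'.1.filter (fun j => j < i''.1)).card) *
          (if I'.1.erase i''.1 = J then (((if i = i''.1 then (1:ℝ) else 0) : ℝ) : ℂ) else 0))
        = if I' = I then ((-1:ℂ)^m) else 0 := by
      by_cases hII : I' = I
      · subst hII
        rw [if_pos rfl]
        rw [Finset.sum_eq_single_of_mem (⟨i, hi⟩ : {y // y ∈ I'.1}) (Finset.mem_attach _ _)]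
        · rw [hm]
          simp [hJdef]
        · intro b _ hbne
          have hb1 : b.1 ≠ i := fun h => hbne (Subtype.ext h)
          have hcond : I'.1.erase b.1 ≠ J := by
            intro h
            have : i ∈ I'.1.erase b.1 := Finset.mem_erase.mpr ⟨Ne.symm hb1, hi⟩
            rw [h, hJdef] at this
            exact Finset.notMem_erase i I'.1 this
          simp [hcond]
      · rw [if_neg hII]
        refine Finset.sum_eq_zero fun b _ => ?_
        by_cases hcond : I'.1.erase b.1 = J
        · have hib : i ≠ b.1 := by
            intro h
            apply hII
            apply Subtype.ext
            have h1 : I'.1 = insert b.1 (I'.1.erase b.1) := (Finset.insert_erase b.2).symm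
            rw [hcond, hJdef, ← h] at h1
            rw [h1, Finset.insert_erase hi]
          simp [hcond, hib]
        · simp [hcond]
    apply tendsto_integral_of_dominated_convergence
      (bound := fun x => ‖u x I'‖ * ((ℓ : ℝ) * (2*M+1)))
    · intro k
      refine (hu I').aestronglyMeasurable.mul (Continuous.aestronglyMeasurable ?_)
      refine continuous_finset_sum _ fun i'' _ => continuous_const.mul ?_
      by_cases hcond : I'.1.erase i''.1 = J
      · simp only [hcond, if_true]
        exact Complex.continuous_ofReal.comp (Dq_continuous n i (c k) i''.1)
      · simp only [hcond, if_false]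
        exact continuous_const
    · exact (hu I').norm.mul_const _
    · intro k
      refine Filter.Eventually.of_forall fun x => ?_
      rw [norm_mul]
      refine mul_le_mul_of_nonneg_left ?_ (norm_nonneg _)
      calc ‖∑ i'' ∈ I'.1.attach,
            (-1 : ℂ) ^ ((I'.1.filter (fun j => j < i''.1)).card) *
              (if I'.1.erase i''.1 = J then ((Dq n i (c k) x i''.1 : ℝ) : ℂ) else 0)‖
          ≤ ∑ i'' ∈ I'.1.attach, ‖(-1 : ℂ) ^ ((I'.1.filter (fun j => j < i''.1)).card) *
              (if I'.1.erase i''.1 = J then ((Dq n i (c k) x i''.1 : ℝ) : ℂ) else 0)‖ :=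
            norm_sum_le _ _
        _ ≤ ∑ _i'' ∈ I'.1.attach, (2*M+1) := by
            refine Finset.sum_le_sum fun i'' _ => ?_
            rw [norm_mul]
            have h1 : ‖(-1 : ℂ) ^ ((I'.1.filter (fun j => j < i''.1)).card)‖ = 1 := by
              rw [norm_pow]; simp
            rw [h1, one_mul]
            by_cases hcond : I'.1.erase i''.1 = J
            · simp only [hcond, if_true]
              rw [Complex.norm_real, Real.norm_eq_abs]
              exact Dq_bound n i hM (c k) x i''.1
            · simp only [hcond, if_false, norm_zero]
              positivity
        _ = (ℓ : ℝ) * (2*M+1) := by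
            rw [Finset.sum_const, Finset.card_attach, I'.2, nsmul_eq_mul]
    · refine Filter.Eventually.of_forall fun x => ?_
      have hS : Tendsto (fun k : ℕ => ∑ i'' ∈ I'.1.attach,
          (-1 : ℂ) ^ ((I'.1.filter (fun j => j < i''.1)).card) *
            (if I'.1.erase i''.1 = J then ((Dq n i (c k) x i''.1 : ℝ) : ℂ) else 0)) atTop
          (𝓝 (∑ i'' ∈ I'.1.attach,
            (-1 : ℂ) ^ ((I'.1.filter (fun j => j < i''.1)).card) *
              (if I'.1.erase i''.1 = J then (((if i = i''.1 then (1:ℝ) else 0) : ℝ) : ℂ) else 0))) := by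
        refine tendsto_finset_sum _ fun i'' _ => ?_
        by_cases hcond : I'.1.erase i''.1 = J
        · simp only [hcond, if_true]
          refine Tendsto.const_mul _ ?_
          exact (Complex.continuous_ofReal.tendsto _).comp (Dq_tendsto n i hM x i''.1)
        · simp only [hcond, if_false, mul_zero]
          exact tendsto_const_nhds
      rw [hcomb] at hS
      exact hS.const_mul (u x I')
  -- assemble
  have htend := tendsto_finset_sum Finset.univ
    (fun (I' : {I : Finset (Fin n) // I.card = ℓ}) (_ : I' ∈ Finset.univ) => hpt I')
  have h2 : Tendsto (fun k : ℕ => ∑ I' : {I : Finset (Fin n) // I.card = ℓ},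
      ∫ x, u x I' * ∑ i'' ∈ I'.1.attach,
        (-1 : ℂ) ^ ((I'.1.filter (fun j => j < i''.1)).card) *
          fderiv ℝ (Φ (c k) ⟨I'.1.erase i''.1, by
            rw [Finset.card_erase_of_mem i''.2, I'.2]⟩) x (EuclideanSpace.single i''.1 1)) atTop
      (𝓝 0) := by
    have he : (fun k : ℕ => ∑ I' : {I : Finset (Fin n) // I.card = ℓ},
        ∫ x, u x I' * ∑ i'' ∈ I'.1.attach,
          (-1 : ℂ) ^ ((I'.1.filter (fun j => j < i''.1)).card) *
            fderiv ℝ (Φ (c k) ⟨I'.1.erase i''.1, by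
              rw [Finset.card_erase_of_mem i''.2, I'.2]⟩) x (EuclideanSpace.single i''.1 1))
        = fun _ => (0:ℂ) := funext hzero
    rw [he]
    exact tendsto_const_nhds
  have hlim0 : (∑ I' : {I : Finset (Fin n) // I.card = ℓ},
      ∫ x, u x I' * (if I' = I then ((-1:ℂ)^m) else 0)) = 0 :=
    tendsto_nhds_unique htend h2
  have hsimp : (∑ I' : {I : Finset (Fin n) // I.card = ℓ},
      ∫ x, u x I' * (if I' = I then ((-1:ℂ)^m) else 0)) = ((-1:ℂ)^m) * ∫ x, u x I := by
    rw [Finset.sum_eq_single_of_mem I (Finset.mem_univ I)]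
    · rw [if_pos rfl, integral_mul_const]
      ring
    · intro b _ hb
      simp [hb]
  rw [hsimp] at hlim0
  have hne : ((-1:ℂ)^m) ≠ 0 := pow_ne_zero _ (by norm_num)
  exact (mul_eq_zero.mp hlim0).resolve_left hne
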